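/- Let p be an odd prime and G ≅ Z_{p^{t_1}} ⊕ ⋯ ⊕ Z_{p^{t_m}} a finite abelian p-group of order n with 1 ≤ t_1 ≤ ⋯ ≤ t_m. If (G, B_k^x) is a 1-design for some 2 ≤ k ≤ n and x ∈ G, then p divides k. -/
import Mathlib

open Finset

/-- The family of `k`-element subsets of `G` whose elements sum to `x`. -/
def sumBlocks (G : Type) [AddCommGroup G] [Fintype G] [DecidableEq G]
    (k : ℕ) (x : G) : Finset (Finset G) :=
  Finset.univ.filter (fun T => T.card = k ∧ T.sum id = x)

/-- The family of `k`-element subsets of `G \ {0}` whose elements sum to `x`. -/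
def sumBlocksStar (G : Type) [AddCommGroup G] [Fintype G] [DecidableEq G]
    (k : ℕ) (x : G) : Finset (Finset G) :=
  Finset.univ.filter (fun T => T.card = k ∧ T.sum id = x ∧ (0 : G) ∉ T)

/-- `(G, B_k^x)` is a 1-design: the block family is nonempty and every
point of `G` lies in the same number of blocks. -/
def isOneDesign (G : Type) [AddCommGroup G] [Fintype G] [DecidableEq G]
    (k : ℕ) (x : G) : Prop :=
  sumBlocks G k x ≠ ∅ ∧ ∃ r : ℕ, ∀ y : G,
    ((sumBlocks G k x).filter (fun B => y ∈ B)).card = r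

/-- `e(x) = max {d : d ∣ exp(G), x ∈ dG}`. -/
noncomputable def eMax (G : Type) [AddCommGroup G] [Fintype G] [DecidableEq G] (x : G) : ℕ :=
  Nat.findGreatest (fun d => d ∣ AddMonoid.exponent G ∧ ∃ y : G, d • y = x)
    (AddMonoid.exponent G)


lemma mem_sumBlocks_aux {G : Type} [AddCommGroup G] [Fintype G] [DecidableEq G]
    {k : ℕ} {x : G} {T : Finset G} :
    T ∈ sumBlocks G k x ↔ T.card = k ∧ T.sum id = x := by
  simp [sumBlocks]

lemma image_mem_sumBlocks_aux {G : Type} [AddCommGroup G] [Fintype G] [DecidableEq G]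
    {k : ℕ} {x : G} {T : Finset G} (g : G) (hT : T ∈ sumBlocks G k x) :
    T.image (· + g) ∈ sumBlocks G k (x + k • g) := by
  rw [mem_sumBlocks_aux] at hT ⊢
  obtain ⟨hc, hs⟩ := hT
  constructor
  · rw [Finset.card_image_of_injective _ (add_left_injective g), hc]
  · rw [Finset.sum_image (by intro a _ b _ h; exact add_left_injective g h)]
    simp only [id] at hs ⊢
    rw [Finset.sum_add_distrib, Finset.sum_const, hc, hs]

lemma card_sumBlocks_translate {G : Type} [AddCommGroup G] [Fintype G] [DecidableEq G]
    (k : ℕ) (x g : G) :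
    (sumBlocks G k (x + k • g)).card = (sumBlocks G k x).card := by
  refine Finset.card_nbij' (fun T => T.image (· + (-g))) (fun T => T.image (· + g))
    ?_ ?_ ?_ ?_
  · intro T hT
    have := image_mem_sumBlocks_aux (-g) hT
    rwa [smul_neg, add_neg_cancel_right] at this
  · intro T hT
    exact image_mem_sumBlocks_aux g hT
  · intro T _; simp only []; rw [Finset.image_image]; ext t; simp
  · intro T _; simp only []; rw [Finset.image_image]; ext t; simp

lemma sum_card_sumBlocks {G : Type} [AddCommGroup G] [Fintype G] [DecidableEq G] (k : ℕ) :
    ∑ x' : G, (sumBlocks G k x').card = (Fintype.card G).choose k := by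
  have h := Finset.card_eq_sum_card_fiberwise
    (s := Finset.univ.powersetCard k) (t := Finset.univ)
    (f := fun T : Finset G => T.sum id) (fun T _ => mem_univ _)
  rw [Finset.card_powersetCard, Finset.card_univ] at h
  rw [h]
  apply Finset.sum_congr rfl
  intro x' _
  congr 1
  ext T
  simp [mem_sumBlocks_aux, Finset.mem_powersetCard_univ]


lemma incidence_sum {G : Type} [AddCommGroup G] [Fintype G] [DecidableEq G]
    (k : ℕ) (x : G) :
    ∑ y : G, ((sumBlocks G k x).filter (fun B => y ∈ B)).card = (sumBlocks G k x).card * k := by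
  calc ∑ y : G, ((sumBlocks G k x).filter (fun B => y ∈ B)).card
      = ∑ y : G, ∑ T ∈ sumBlocks G k x, if y ∈ T then 1 else 0 := by
        apply Finset.sum_congr rfl; intro y _; exact Finset.card_filter _ _
    _ = ∑ T ∈ sumBlocks G k x, ∑ y : G, if y ∈ T then 1 else 0 := Finset.sum_comm
    _ = ∑ T ∈ sumBlocks G k x, T.card := by
        apply Finset.sum_congr rfl; intro T _
        rw [Finset.sum_ite_mem, Finset.univ_inter, Finset.sum_const, smul_eq_mul, mul_one]
    _ = (sumBlocks G k x).card * k := by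
        rw [Finset.sum_congr rfl fun T hT => (mem_sumBlocks_aux.mp hT).1,
          Finset.sum_const, smul_eq_mul]

theorem stmt2 (p : ℕ) (hp : p.Prime) (hodd : Odd p)
    (G : Type) [AddCommGroup G] [Fintype G] [DecidableEq G]
    (hpg : ∀ g : G, ∃ i : ℕ, p ^ i • g = 0)
    (k : ℕ) (hk2 : 2 ≤ k) (hkn : k ≤ Fintype.card G) (x : G)
    (hdes : isOneDesign G k x) : p ∣ k := by
  by_contra hnd
  haveI : Fact p.Prime := ⟨hp⟩
  set n := Fintype.card G with hn
  -- G is a p-group, so n = p ^ m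
  have hPG : IsPGroup p (Multiplicative G) := by
    intro g
    obtain ⟨i, hi⟩ := hpg (Multiplicative.toAdd g)
    exact ⟨i, by rw [← ofAdd_toAdd g, ← ofAdd_nsmul, hi, ofAdd_zero]⟩
  obtain ⟨m, hm⟩ := IsPGroup.iff_card.mp hPG
  have hnm : n = p ^ m := by
    rw [hn, ← Fintype.card_multiplicative, ← Nat.card_eq_fintype_card, hm]
  -- injectivity / surjectivity of k • ·
  have hsurj : Function.Surjective (fun g : G => k • g) := by
    apply Finite.injective_iff_surjective.mp
    intro a b hab
    simp only at hab
    have h0 : k • (a - b) = 0 := by rw [smul_sub, hab, sub_self]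
    obtain ⟨i, hi⟩ := hpg (a - b)
    have h1 := addOrderOf_dvd_of_nsmul_eq_zero h0
    have h2 := addOrderOf_dvd_of_nsmul_eq_zero hi
    have hcop : Nat.Coprime (p ^ i) k :=
      ((Nat.Prime.coprime_iff_not_dvd hp).mpr hnd).pow_left i
    have h3 : addOrderOf (a - b) ∣ 1 := by
      rw [← hcop]; exact Nat.dvd_gcd h2 h1
    have h4 : a - b = 0 := by
      rwa [Nat.dvd_one, AddMonoid.addOrderOf_eq_one_iff] at h3
    exact sub_eq_zero.mp h4
  -- all sumBlocks have the same cardinality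
  have hsame : ∀ x' : G, (sumBlocks G k x').card = (sumBlocks G k x).card := by
    intro x'
    obtain ⟨g, hg⟩ := hsurj (x' - x)
    have := card_sumBlocks_translate (G := G) k x g
    simp only at hg
    rw [hg, add_sub_cancel] at this
    exact this
  obtain ⟨hne, r, hr⟩ := hdes
  set B := sumBlocks G k x with hB
  -- n * B.card = choose n k
  have h1 : n * B.card = n.choose k := by
    rw [← sum_card_sumBlocks (G := G) k]
    rw [Finset.sum_congr rfl (fun x' _ => hsame x'), Finset.sum_const, smul_eq_mul,
      Finset.card_univ]
  -- n * r = B.card * k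
  have h3 : n * r = B.card * k := by
    rw [← incidence_sum (G := G) k x,
      Finset.sum_congr rfl (fun y _ => hr y), Finset.sum_const, smul_eq_mul, Finset.card_univ]
  -- r ≥ 1
  have hr1 : 1 ≤ r := by
    obtain ⟨T, hT⟩ := Finset.nonempty_iff_ne_empty.mpr hne
    obtain ⟨hc, _⟩ := mem_sumBlocks_aux.mp hT
    have hTne : T.Nonempty := by
      rw [← Finset.card_pos, hc]; omega
    obtain ⟨y, hy⟩ := hTne
    have h0 : 0 < (B.filter (fun T => y ∈ T)).card :=
      Finset.card_pos.mpr ⟨T, Finset.mem_filter.mpr ⟨hT, hy⟩⟩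
    rw [hr y] at h0
    omega
  -- n^2 * r = choose n k * k
  have hkey : n * n * r = n.choose k * k := by
    calc n * n * r = n * (n * r) := by ring
      _ = n * (B.card * k) := by rw [h3]
      _ = (n * B.card) * k := by ring
      _ = n.choose k * k := by rw [h1]
  have hdvd : p ^ (2 * m) ∣ n.choose k := by
    have hd1 : p ^ (2 * m) ∣ n.choose k * k := by
      refine ⟨r, ?_⟩
      rw [← hkey, hnm]; ring
    have hcop : Nat.Coprime (p ^ (2 * m)) k :=
      ((Nat.Prime.coprime_iff_not_dvd hp).mpr hnd).pow_left _
    exact (Nat.Coprime.dvd_of_dvd_mul_right hcop) hd1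
  -- valuation of choose
  have hk0 : k ≠ 0 := by omega
  have hkpm : k ≤ p ^ m := hnm ▸ hkn
  have hmul0 : multiplicity p k = 0 := multiplicity_eq_zero.mpr hnd
  have hE : emultiplicity p ((p ^ m).choose k) = (m : ℕ∞) := by
    rw [hp.emultiplicity_choose_prime_pow hkpm hk0, hmul0, Nat.sub_zero]
  have hle : ((2 * m : ℕ) : ℕ∞) ≤ emultiplicity p ((p ^ m).choose k) :=
    le_emultiplicity_of_pow_dvd (hnm ▸ hdvd)
  rw [hE, Nat.cast_le] at hle
  have hm0 : m = 0 := by omega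
  rw [hm0, pow_zero] at hnm
  omega
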